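/- In the single-score MNL market with sorted cutoffs, the demand vector satisfies D = A p + γ/Γ, where A is the upper triangular matrix with A_{ii} = −γ_i / (Σ_{k=1}^{i} γ_k), A_{ij} = γ_i (1/Σ_{k=1}^{j−1} γ_k − 1/Σ_{k=1}^{j} γ_k) for i < j, and A_{ij} = 0 for i > j, and Γ = Σ_i γ_i. -/
import Mathlib


open Finset

/-- Cutoff of the next school, extended with `p_{n+1} = 1`. -/
noncomputable def nextCutoff {n : ℕ} (p : Fin n → ℝ) (d : Fin n) : ℝ :=
  if h : (d : ℕ) + 1 < n then p ⟨(d : ℕ) + 1, h⟩ else 1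

/-- Single-score MNL demand at sorted cutoffs. -/
noncomputable def mnlDemand {n : ℕ} (γ p : Fin n → ℝ) (c : Fin n) : ℝ :=
  ∑ d ∈ Ici c, (γ c / ∑ i ∈ Iic d, γ i) * (nextCutoff p d - p d)

/-- The upper triangular demand matrix `A`. -/
noncomputable def Amat {n : ℕ} (γ : Fin n → ℝ) : Matrix (Fin n) (Fin n) ℝ :=
  Matrix.of fun i j =>
    if i = j then -γ i / ∑ k ∈ Iic i, γ k
    else if i < j then γ i * (1 / ∑ k ∈ Iio j, γ k - 1 / ∑ k ∈ Iic j, γ k)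
    else 0

lemma mnl_aux_succ_mem {m : ℕ} {c d : Fin (m + 1)} (hd : d ∈ Ico c ⊤) :
    d + 1 ∈ Ioi c := by
  simp only [Finset.mem_Ico, Finset.mem_Ioi] at *
  obtain ⟨h1, h2⟩ := hd
  have hlt : d < Fin.last m := by rwa [← Fin.top_eq_last]
  have hv : ((d + 1 : Fin (m+1)) : ℕ) = (d : ℕ) + 1 := Fin.val_add_one_of_lt hlt
  rw [Fin.lt_def] at *
  omega

lemma mnl_aux_pred_mem {m : ℕ} {c e : Fin (m + 1)} (he : e ∈ Ioi c) :
    e - 1 ∈ Ico c ⊤ := by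
  simp only [Finset.mem_Ico, Finset.mem_Ioi] at *
  have hne : e ≠ 0 := by
    intro h; subst h; exact absurd he (by simp [Fin.lt_def])
  have hv : ((e - 1 : Fin (m+1)) : ℕ) = (e : ℕ) - 1 := by
    rw [Fin.coe_sub_one, if_neg hne]
  have hpos : 0 < (e : ℕ) := by
    rcases Nat.eq_zero_or_pos (e : ℕ) with h | h
    · exact absurd (Fin.ext h) hne
    · exact h
  constructor
  · rw [Fin.le_def, hv]; have := Fin.lt_def.mp he; omega
  · rw [Fin.lt_def, hv, Fin.top_eq_last, Fin.val_last]
    have := e.isLt; omega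

lemma mnl_aux_pred_succ {m : ℕ} {c e : Fin (m + 1)} (he : e ∈ Ioi c) :
    e - 1 + 1 = e := by
  have hne : e ≠ 0 := by
    intro h; subst h; simp only [Finset.mem_Ioi] at he
    exact absurd he (by simp [Fin.lt_def])
  have hv : ((e - 1 : Fin (m+1)) : ℕ) = (e : ℕ) - 1 := by
    rw [Fin.coe_sub_one, if_neg hne]
  have hlt : e - 1 < Fin.last m := by
    rw [Fin.lt_def, hv, Fin.val_last]
    have h1 := e.isLt
    have h2 : 0 < (e : ℕ) := Nat.pos_of_ne_zero (fun h => hne (Fin.ext h))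
    omega
  ext
  rw [Fin.val_add_one_of_lt hlt, hv]
  have h2 : 0 < (e : ℕ) := Nat.pos_of_ne_zero (fun h => hne (Fin.ext h))
  omega

lemma mnl_aux_Iic_eq_Iio {m : ℕ} {d : Fin (m + 1)} (hd : d < Fin.last m) :
    Iic d = Iio (d + 1) := by
  ext i
  simp only [Finset.mem_Iic, Finset.mem_Iio, Fin.le_def, Fin.lt_def,
    Fin.val_add_one_of_lt hd]
  omega

/-- In the single-score MNL market with sorted cutoffs, `D = A p + γ / Γ`. -/
theorem mnlDemand_eq_matrix {n : ℕ} (γ p : Fin n → ℝ)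
    (hγ : ∀ i, 0 < γ i) (hp : Monotone p)
    (hp0 : ∀ i, p i ∈ Set.Icc (0 : ℝ) 1) :
    ∀ c : Fin n,
      mnlDemand γ p c = (Amat γ).mulVec p c + γ c / ∑ i, γ i := by
  intro c
  match n, c with
  | m + 1, c =>
  -- Right hand side: reduce the matrix-vector product to a sum over `Ici c`.
  have hRHS : (Amat γ).mulVec p c
      = (-γ c / ∑ k ∈ Iic c, γ k) * p c
        + ∑ j ∈ Ioi c, (γ c * (1 / ∑ k ∈ Iio j, γ k - 1 / ∑ k ∈ Iic j, γ k)) * p j := by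
    rw [Matrix.mulVec, dotProduct]
    rw [show (Finset.univ : Finset (Fin (m+1))) = Ici c ∪ (Ici c)ᶜ by
      simp [Finset.union_compl]]
    rw [Finset.sum_union (disjoint_compl_right)]
    have h0 : ∑ j ∈ (Ici c)ᶜ, Amat γ c j * p j = 0 := by
      apply Finset.sum_eq_zero
      intro j hj
      simp only [Finset.mem_compl, Finset.mem_Ici, not_le] at hj
      have h1 : c ≠ j := ne_of_gt hj
      have h2 : ¬ c < j := not_lt_of_gt hj
      simp [Amat, h1, h2]
    rw [h0, add_zero, ← Finset.Ioi_insert c, Finset.sum_insert (Finset.notMem_Ioi_self)]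
    congr 1
    · simp [Amat]
    · apply Finset.sum_congr rfl
      intro j hj
      have hlt : c < j := Finset.mem_Ioi.mp hj
      simp [Amat, ne_of_lt hlt, hlt]
  -- Left hand side: split the telescoping sum.
  have hsplit : mnlDemand γ p c
      = (∑ d ∈ Ici c, (γ c / ∑ i ∈ Iic d, γ i) * nextCutoff p d)
        - ∑ d ∈ Ici c, (γ c / ∑ i ∈ Iic d, γ i) * p d := by
    rw [mnlDemand, ← Finset.sum_sub_distrib]
    apply Finset.sum_congr rfl
    intro d _
    ring
  -- The `nextCutoff` part.
  have hIci : (Ici c : Finset (Fin (m+1))) = insert ⊤ (Ico c ⊤) := by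
    rw [Finset.Ico_insert_right le_top]
    rfl
  have hA : ∑ d ∈ Ici c, (γ c / ∑ i ∈ Iic d, γ i) * nextCutoff p d
      = γ c / (∑ i, γ i)
        + ∑ e ∈ Ioi c, (γ c / ∑ i ∈ Iio e, γ i) * p e := by
    rw [hIci, Finset.sum_insert (Finset.right_notMem_Ico)]
    congr 1
    · have htop : nextCutoff p (⊤ : Fin (m+1)) = 1 := by
        rw [nextCutoff, dif_neg]
        simp [Fin.top_eq_last]
      have huniv : (Iic (⊤ : Fin (m+1))) = Finset.univ := by
        ext i; simp
      rw [htop, huniv, mul_one]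
    · refine Finset.sum_nbij' (fun d => d + 1) (fun e => e - 1)
        (fun d hd => mnl_aux_succ_mem hd) (fun e he => mnl_aux_pred_mem he)
        ?_ (fun e he => mnl_aux_pred_succ he) ?_
      · intro d hd
        have hlt : d < Fin.last m := by
          rw [← Fin.top_eq_last]; exact (Finset.mem_Ico.mp hd).2
        have : d + 1 ≠ 0 := by
          intro h
          have := Fin.val_add_one_of_lt hlt
          rw [h] at this
          simp at this
        ext
        rw [Fin.coe_sub_one, if_neg this, Fin.val_add_one_of_lt hlt]
        omega
      · intro d hd
        have hlt : d < Fin.last m := by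
          rw [← Fin.top_eq_last]; exact (Finset.mem_Ico.mp hd).2
        have hnext : nextCutoff p d = p (d + 1) := by
          rw [nextCutoff, dif_pos (by have := Fin.lt_def.mp hlt; simpa using this)]
          congr 1
          ext
          simp [Fin.val_add_one_of_lt hlt]
        rw [hnext, mnl_aux_Iic_eq_Iio hlt]
  -- The `p d` part.
  have hB : ∑ d ∈ Ici c, (γ c / ∑ i ∈ Iic d, γ i) * p d
      = (γ c / ∑ i ∈ Iic c, γ i) * p c
        + ∑ e ∈ Ioi c, (γ c / ∑ i ∈ Iic e, γ i) * p e := by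
    rw [← Finset.Ioi_insert c, Finset.sum_insert (Finset.notMem_Ioi_self)]
  have hsum : ∑ j ∈ Ioi c, (γ c * (1 / ∑ k ∈ Iio j, γ k - 1 / ∑ k ∈ Iic j, γ k)) * p j
      = (∑ e ∈ Ioi c, (γ c / ∑ i ∈ Iio e, γ i) * p e)
        - ∑ e ∈ Ioi c, (γ c / ∑ i ∈ Iic e, γ i) * p e := by
    rw [← Finset.sum_sub_distrib]
    apply Finset.sum_congr rfl
    intro j _
    ring
  rw [hsplit, hA, hB, hRHS, hsum]
  ring
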